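/- Let n ≥ 2 and set δ_n := max{ m(Q) : Q ∈ SU_n }. Then δ_n = n·π² if n is even, and δ_n = (n − 1/n)·π² if n is odd; that is, δ_n is an upper bound for m on SU_n and is attained by some Q ∈ SU_n. -/

import Mathlib

noncomputable section

open scoped Real Matrix
open Matrix

/-- The special unitary group `SU_n` as a set of matrices: `Q Qᴴ = 1` and `det Q = 1`. -/
def SpecialUnitary (n : ℕ) : Set (Matrix (Fin n) (Fin n) ℂ) :=
  {Q | Q * Qᴴ = 1 ∧ Q.det = 1}

/-- The Lie algebra `su_n`: skew-hermitian traceless matrices. -/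
def suSet (n : ℕ) : Set (Matrix (Fin n) (Fin n) ℂ) :=
  {X | Xᴴ = -X ∧ Matrix.trace X = 0}

/-- The squared Frobenius norm `‖X‖_φ² = trace (X Xᴴ)` (a real number). -/
def frobSq {n : ℕ} (X : Matrix (Fin n) (Fin n) ℂ) : ℝ :=
  (Matrix.trace (X * Xᴴ)).re

/-- `m(Q) = inf { ‖X‖_φ² : X ∈ su_n, exp X = Q }`. -/
def mQ {n : ℕ} (Q : Matrix (Fin n) (Fin n) ℂ) : ℝ :=
  sInf {r : ℝ | ∃ X ∈ suSet n, NormedSpace.exp X = Q ∧ frobSq X = r}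

/-- `Θ(Q)`: the set of minimizing `su_n`-logarithms of `Q`. -/
def ThetaQ {n : ℕ} (Q : Matrix (Fin n) (Fin n) ℂ) : Set (Matrix (Fin n) (Fin n) ℂ) :=
  {X | X ∈ suSet n ∧ NormedSpace.exp X = Q ∧ frobSq X = mQ Q}

/-- `su_n`-plog(Q): generalized principal `su_n`-logarithms of `Q`, i.e. `su_n`-logarithms
all of whose eigenvalues (roots of the characteristic polynomial) have imaginary part
in `[-π, π]`. -/
def plog {n : ℕ} (Q : Matrix (Fin n) (Fin n) ℂ) : Set (Matrix (Fin n) (Fin n) ℂ) :=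
  {X | X ∈ suSet n ∧ NormedSpace.exp X = Q ∧
    ∀ lam ∈ X.charpoly.roots, -π ≤ lam.im ∧ lam.im ≤ π}

namespace Stmt18Aux

variable {n : ℕ}

/-- Key combinatorial inequality. -/
lemma keyIneq {n m : ℕ} (f : Fin n → ℝ) (h0 : ∀ i, 0 ≤ f i) (h1 : ∀ i, f i < 1)
    (A : Finset (Fin n)) (hcard : A.card = m) (hsum : ∑ i, f i = m)
    (hmax : ∀ i ∈ A, ∀ j ∉ A, f j ≤ f i) :
    ∑ i ∈ A, (f i - 1) ^ 2 + ∑ i ∈ Aᶜ, (f i) ^ 2 ≤ (m : ℝ) * (n - m) / n := by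
  have hmn : m ≤ n := by simpa [hcard] using Finset.card_le_univ A
  rcases Nat.eq_zero_or_pos n with rfl | hn
  · have hA0 : A = ∅ := Finset.eq_empty_of_isEmpty A
    have hm0 : m = 0 := by simpa [hA0] using hcard.symm
    have hAc0 : (Aᶜ : Finset (Fin 0)) = ∅ := Finset.eq_empty_of_isEmpty _
    simp [hA0, hm0, hAc0]
  have hn' : (0:ℝ) < n := by exact_mod_cast hn
  rcases Finset.eq_empty_or_nonempty A with rfl | hA
  · -- m = 0, all f i = 0
    have hm : m = 0 := by simpa using hcard.symm
    subst hm
    have hall : ∀ i, f i = 0 := by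
      intro i
      have := Finset.sum_eq_zero_iff_of_nonneg (fun j _ => h0 j) |>.mp (by simpa using hsum)
      exact this i (Finset.mem_univ i)
    simp [hall]
  rcases Finset.eq_empty_or_nonempty Aᶜ with hAc | hAc
  · -- A = univ, contradiction : sum = n but each f < 1
    exfalso
    have hAu : A = Finset.univ := by
      rwa [Finset.compl_eq_empty_iff] at hAc
    have : (∑ i, f i) < n := by
      calc ∑ i, f i < ∑ _i : Fin n, (1:ℝ) :=
            Finset.sum_lt_sum_of_nonempty (by simpa using Finset.univ_nonempty_iff.2 ⟨⟨0, hn⟩⟩) (fun i _ => h1 i)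
        _ = n := by simp
    have hmn' : m = n := by
      have := hcard; rw [hAu, Finset.card_univ, Fintype.card_fin] at this; omega
    rw [hsum, hmn'] at this
    exact lt_irrefl _ this
  obtain ⟨a, haA, hamin⟩ := Finset.exists_min_image A f hA
  obtain ⟨b, hbAc, hbmax⟩ := Finset.exists_max_image Aᶜ f hAc
  have hbA : b ∉ A := by simpa using hbAc
  have hba : f b ≤ f a := hmax a haA b hbA
  set P : ℝ := ∑ i ∈ Aᶜ, f i with hP
  have hcardAc : (Aᶜ : Finset (Fin n)).card = n - m := by
    rw [Finset.card_compl, hcard, Fintype.card_fin]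
  have hPalt : ∑ i ∈ A, (1 - f i) = P := by
    have h2 : ∑ i ∈ A, f i + ∑ i ∈ Aᶜ, f i = (m:ℝ) := by
      rw [Finset.sum_add_sum_compl]; exact hsum
    have h3 : ∑ i ∈ A, (1 - f i) = (m:ℝ) - ∑ i ∈ A, f i := by
      rw [Finset.sum_sub_distrib]
      simp [hcard]
    rw [h3]; linarith
  have hPnn : 0 ≤ P := Finset.sum_nonneg fun i _ => h0 i
  -- main bound : LHS ≤ P
  have hS1 : ∑ i ∈ A, (f i - 1)^2 ≤ (1 - f a) * P := by
    rw [← hPalt, Finset.mul_sum]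
    apply Finset.sum_le_sum
    intro i hi
    have h1' : 0 ≤ 1 - f i := by linarith [h1 i]
    have h2' : 1 - f i ≤ 1 - f a := by linarith [hamin i hi]
    calc (f i - 1)^2 = (1 - f i) * (1 - f i) := by ring
      _ ≤ (1 - f a) * (1 - f i) := by nlinarith
  have hS2 : ∑ i ∈ Aᶜ, (f i)^2 ≤ f b * P := by
    rw [hP, Finset.mul_sum]
    apply Finset.sum_le_sum
    intro i hi
    have := hbmax i hi
    nlinarith [h0 i]
  have hmain : ∑ i ∈ A, (f i - 1) ^ 2 + ∑ i ∈ Aᶜ, (f i) ^ 2 ≤ P := by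
    have : (1 - f a) * P + f b * P ≤ P := by nlinarith
    linarith
  -- two cases
  rcases le_or_gt (f b) ((m:ℝ)/n) with hc | hc
  · have hPb : P ≤ (n - m : ℝ) * f b := by
      calc P ≤ ∑ _i ∈ Aᶜ, f b := Finset.sum_le_sum fun i hi => hbmax i hi
        _ = (n - m : ℝ) * f b := by
            rw [Finset.sum_const, hcardAc, nsmul_eq_mul, Nat.cast_sub hmn]
    have hnm : (0:ℝ) ≤ (n:ℝ) - m := by
      have : (m:ℝ) ≤ n := by exact_mod_cast hmn
      linarith
    calc ∑ i ∈ A, (f i - 1) ^ 2 + ∑ i ∈ Aᶜ, (f i) ^ 2 ≤ P := hmain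
      _ ≤ (n - m : ℝ) * f b := hPb
      _ ≤ (n - m : ℝ) * ((m:ℝ)/n) := by nlinarith
      _ = (m : ℝ) * (n - m) / n := by ring
  · have hfa : (m:ℝ)/n < f a := lt_of_lt_of_le hc hba
    have hPa : P ≤ (m : ℝ) * (1 - f a) := by
      rw [← hPalt]
      calc ∑ i ∈ A, (1 - f i) ≤ ∑ _i ∈ A, (1 - f a) :=
            Finset.sum_le_sum fun i hi => by linarith [hamin i hi]
        _ = (m:ℝ) * (1 - f a) := by rw [Finset.sum_const, hcard, nsmul_eq_mul]
    calc ∑ i ∈ A, (f i - 1) ^ 2 + ∑ i ∈ Aᶜ, (f i) ^ 2 ≤ P := hmain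
      _ ≤ (m : ℝ) * (1 - f a) := hPa
      _ ≤ (m : ℝ) * (1 - (m:ℝ)/n) := by
          have : (0:ℝ) ≤ m := Nat.cast_nonneg m
          nlinarith
      _ = (m : ℝ) * (n - m) / n := by field_simp
  
/-- existence of a maximizing subset -/
lemma exists_subset {n m : ℕ} (f : Fin n → ℝ) (hmn : m ≤ n) :
    ∃ A : Finset (Fin n), A.card = m ∧ ∀ i ∈ A, ∀ j ∉ A, f j ≤ f i := by
  have hne : (Finset.powersetCard m (Finset.univ : Finset (Fin n))).Nonempty := by
    apply Finset.powersetCard_nonempty.2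
    simpa using hmn
  obtain ⟨A, hAmem, hAmax⟩ := Finset.exists_max_image _ (fun s : Finset (Fin n) => ∑ i ∈ s, f i) hne
  rw [Finset.mem_powersetCard] at hAmem
  refine ⟨A, hAmem.2, ?_⟩
  intro i hi j hj
  by_contra hlt
  push_neg at hlt
  set A' : Finset (Fin n) := insert j (A.erase i) with hA'
  have hjA' : j ∉ A.erase i := fun h => hj (Finset.mem_of_mem_erase h)
  have hm1 : 1 ≤ m := hAmem.2 ▸ Finset.card_pos.mpr ⟨i, hi⟩
  have hA'card : A'.card = m := by
    rw [hA', Finset.card_insert_of_notMem hjA', Finset.card_erase_of_mem hi, hAmem.2]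
    omega
  have hA'mem : A' ∈ Finset.powersetCard m Finset.univ := by
    rw [Finset.mem_powersetCard]
    exact ⟨Finset.subset_univ _, hA'card⟩
  have hsum' : ∑ k ∈ A', f k = ∑ k ∈ A, f k - f i + f j := by
    rw [hA', Finset.sum_insert hjA', Finset.sum_erase_eq_sub hi]
    ring
  have := hAmax A' hA'mem
  rw [hsum'] at this
  linarith
  

/-- the value δ_n -/
def deltaVal (n : ℕ) : ℝ :=
  if Even n then (n : ℝ) * π ^ 2 else ((n : ℝ) - 1 / (n : ℝ)) * π ^ 2

lemma exp_shift (x : ℝ) (k : ℤ) :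
    Complex.exp ((x + 2*π*k : ℝ) * Complex.I) = Complex.exp ((x:ℝ) * Complex.I) := by
  push_cast
  rw [add_mul, Complex.exp_add]
  have h1 : ((2:ℂ)*π*k) * Complex.I = (k:ℂ) * (2*π*Complex.I) := by ring
  rw [h1, Complex.exp_int_mul_two_pi_mul_I, mul_one]

lemma numBound {n m : ℕ} (hn : 1 ≤ n) (hmn : m ≤ n) :
    4 * π^2 * ((m : ℝ) * (n - m) / n) ≤ deltaVal n := by
  have hπ : (0:ℝ) < π := Real.pi_pos
  have hn' : (0:ℝ) < n := by exact_mod_cast hn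
  rw [deltaVal]
  split_ifs with he
  · have h4 : 4*(m:ℝ)*((n:ℝ)-m) ≤ (n:ℝ)*n := by nlinarith [sq_nonneg ((n:ℝ) - 2*m)]
    have heq : 4 * π^2 * ((m : ℝ) * (n - m) / n) = (4*π^2*((m:ℝ)*((n:ℝ)-m)))/n := by ring
    rw [heq, div_le_iff₀ hn']
    nlinarith
  · have hne : (n:ℤ) - 2*m ≠ 0 := by
      intro h
      apply he
      refine ⟨m, ?_⟩
      omega
    have h1 : (1:ℤ) ≤ ((n:ℤ) - 2*m)^2 := by
      rcases lt_or_gt_of_ne hne with h | h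
      · nlinarith
      · nlinarith
    have h1' : (1:ℝ) ≤ ((n:ℝ) - 2*m)^2 := by exact_mod_cast h1
    have h4 : 4*(m:ℝ)*((n:ℝ)-m) ≤ (n:ℝ)*n - 1 := by nlinarith
    have key : 4 * π^2 * ((m : ℝ) * (n - m) / n) ≤ ((n:ℝ) * n - 1) * π^2 / n := by
      have heq : 4 * π^2 * ((m : ℝ) * (n - m) / n) = (4*π^2*((m:ℝ)*((n:ℝ)-m)))/n := by ring
      rw [heq, div_le_div_iff₀ hn' hn']
      have h5 : 4*(m:ℝ)*((n:ℝ)-m)*π^2 ≤ ((n:ℝ)*n-1)*π^2 :=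
        mul_le_mul_of_nonneg_right h4 (sq_nonneg π)
      nlinarith [mul_le_mul_of_nonneg_right h5 hn'.le]
    calc 4 * π^2 * ((m : ℝ) * (n - m) / n) ≤ ((n:ℝ) * n - 1) * π^2 / n := key
      _ = ((n:ℝ) - 1/n) * π^2 := by field_simp

lemma exists_angles {n : ℕ} (hn : 1 ≤ n) (d : Fin n → ℂ)
    (habs : ∀ j, ‖d j‖ = 1) (hprod : ∏ j, d j = 1) :
    ∃ θ : Fin n → ℝ, (∀ j, Complex.exp ((θ j : ℝ) * Complex.I) = d j) ∧ (∑ j, θ j) = 0 ∧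
      ∑ j, (θ j) ^ 2 ≤ deltaVal n := by
  have hπ : (0:ℝ) < π := Real.pi_pos
  have hn' : (0:ℝ) < n := by exact_mod_cast hn
  set f : Fin n → ℝ := fun j => (d j).arg / (2*π) + (if (d j).arg < 0 then 1 else 0) with hf
  have h0 : ∀ j, 0 ≤ f j := by
    intro j
    rcases lt_or_ge ((d j).arg) 0 with h | h
    · have harg := Complex.neg_pi_lt_arg (d j)
      simp only [hf, if_pos h]
      have h2 : (-1 : ℝ) < (d j).arg / (2*π) := by
        rw [lt_div_iff₀ (by positivity)]
        linarith
      linarith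
    · simp only [hf, if_neg (not_lt.2 h)]
      have : 0 ≤ (d j).arg / (2*π) := div_nonneg h (by positivity)
      linarith
  have h1 : ∀ j, f j < 1 := by
    intro j
    rcases lt_or_ge ((d j).arg) 0 with h | h
    · simp only [hf, if_pos h]
      have : (d j).arg / (2*π) < 0 := div_neg_of_neg_of_pos h (by positivity)
      linarith
    · simp only [hf, if_neg (not_lt.2 h)]
      have h2 : (d j).arg / (2*π) < 1 := by
        rw [div_lt_one (by positivity)]
        linarith [Complex.arg_le_pi (d j)]
      linarith
  have hexp : ∀ j, Complex.exp ((2*π*(f j) : ℝ) * Complex.I) = d j := by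
    intro j
    have hd : Complex.exp (((d j).arg : ℝ) * Complex.I) = d j := by
      have := Complex.norm_mul_exp_arg_mul_I (d j)
      rwa [habs j, Complex.ofReal_one, one_mul] at this
    rcases lt_or_ge ((d j).arg) 0 with h | h
    · have heq : (2*π*(f j) : ℝ) = (d j).arg + 2*π*(1:ℤ) := by
        simp only [hf, if_pos h]
        push_cast
        field_simp
      rw [heq, exp_shift, hd]
    · have heq : (2*π*(f j) : ℝ) = (d j).arg := by
        simp only [hf, if_neg (not_lt.2 h)]
        field_simp
        ring
      rw [heq, hd]
  set F := ∑ j, f j with hF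
  have hF0 : 0 ≤ F := Finset.sum_nonneg fun j _ => h0 j
  have hFn : F < n := by
    calc F < ∑ _j : Fin n, (1:ℝ) := Finset.sum_lt_sum_of_nonempty
          (Finset.univ_nonempty_iff.2 ⟨⟨0, hn⟩⟩) (fun j _ => h1 j)
      _ = n := by simp
  have hFexp : Complex.exp ((2*π*F : ℝ) * Complex.I) = 1 := by
    have heq : ((2*π*F :ℝ) : ℂ) * Complex.I = ∑ j, ((2*π*(f j) : ℝ) * Complex.I : ℂ) := by
      rw [← Finset.sum_mul]
      congr 1
      rw [hF]
      push_cast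
      rw [Finset.mul_sum]
    rw [heq, Complex.exp_sum, Finset.prod_congr rfl (fun j _ => hexp j)]
    exact hprod
  obtain ⟨k, hk⟩ := Complex.exp_eq_one_iff.1 hFexp
  have hkF : F = (k:ℝ) := by
    have h2 : ((2*π*F :ℝ) : ℂ) = (k:ℂ) * (2*(π:ℂ)) := by
      have h3 : (k:ℂ) * (2 * (π:ℂ) * Complex.I) = ((k:ℂ) * (2*(π:ℂ))) * Complex.I := by ring
      rw [h3] at hk
      exact mul_right_cancel₀ Complex.I_ne_zero hk
    have h3 : (2*π*F :ℝ) = (k:ℝ)*(2*π) := by exact_mod_cast h2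
    have h4 : (2*π:ℝ) ≠ 0 := by positivity
    nlinarith [h3]
  have hk0 : 0 ≤ k := by
    by_contra h
    push_neg at h
    have : (k:ℝ) < 0 := by exact_mod_cast h
    linarith
  set m := k.toNat with hm
  have hmF : (m:ℝ) = F := by
    rw [hkF, hm]
    exact_mod_cast congrArg (Int.cast : ℤ → ℝ) (Int.toNat_of_nonneg hk0)
  have hmn : m ≤ n := by
    have : (m:ℝ) < n := by rw [hmF]; exact hFn
    exact_mod_cast this.le
  obtain ⟨A, hcard, hmax⟩ := exists_subset f hmn
  have hkey := keyIneq f h0 h1 A hcard (by rw [hF] at hmF; rw [← hmF]) hmax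
  refine ⟨fun j => 2*π*(f j - (if j ∈ A then 1 else 0)), ?_, ?_, ?_⟩
  · intro j
    by_cases hj : j ∈ A
    · simp only [if_pos hj]
      have heq : (2*π*(f j - 1) : ℝ) = 2*π*(f j) + 2*π*(-1:ℤ) := by push_cast; ring
      rw [heq, exp_shift]
      exact hexp j
    · simp only [if_neg hj, sub_zero]
      exact hexp j
  · have hsA : ∑ j, (if j ∈ A then (1:ℝ) else 0) = m := by
      rw [Finset.sum_ite_mem]
      simp [Finset.univ_inter, Finset.sum_const, hcard]
    rw [← Finset.mul_sum, Finset.sum_sub_distrib, hsA, ← hF, ← hmF]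
    ring
  · have hsplit : ∑ j, (f j - (if j ∈ A then (1:ℝ) else 0))^2
        = ∑ i ∈ A, (f i - 1) ^ 2 + ∑ i ∈ Aᶜ, (f i) ^ 2 := by
      rw [← Finset.sum_add_sum_compl A]
      congr 1
      · exact Finset.sum_congr rfl fun i hi => by rw [if_pos hi]
      · exact Finset.sum_congr rfl fun i hi => by
          rw [if_neg (Finset.mem_compl.1 hi), sub_zero]
    calc ∑ j, (2*π*(f j - (if j ∈ A then (1:ℝ) else 0)))^2
        = 4*π^2 * ∑ j, (f j - (if j ∈ A then (1:ℝ) else 0))^2 := by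
          rw [Finset.mul_sum]
          exact Finset.sum_congr rfl fun j _ => by ring
      _ ≤ 4*π^2 * ((m : ℝ) * (n - m) / n) := by
          rw [hsplit]
          have : (0:ℝ) < 4*π^2 := by positivity
          exact mul_le_mul_of_nonneg_left hkey this.le
      _ ≤ deltaVal n := numBound hn hmn


lemma circle_infinite : {z : ℂ | ‖z‖ = 1}.Infinite := by
  have hsub : (fun t : ℝ => Complex.exp ((t:ℂ) * Complex.I)) '' (Set.Ioo 0 1)
      ⊆ {z : ℂ | ‖z‖ = 1} := by
    rintro z ⟨t, _, rfl⟩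
    simp [Complex.norm_exp_ofReal_mul_I]
  apply Set.Infinite.mono hsub
  apply Set.Infinite.image
  · intro t1 h1 t2 h2 heq
    rw [Complex.exp_eq_exp_iff_exists_int] at heq
    obtain ⟨k, hk⟩ := heq
    have hk' : (t1:ℂ) * Complex.I - (t2:ℂ)*Complex.I = (k:ℂ) * (2*π*Complex.I) := by
      rw [hk]; ring
    have h3 : ((t1 - t2 : ℝ) : ℂ) * Complex.I = ((k * (2*π) : ℝ) : ℂ) * Complex.I := by
      push_cast
      rw [sub_mul, hk']
      ring
    have h4 : (t1 - t2 : ℝ) = k * (2*π) := by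
      have := mul_right_cancel₀ Complex.I_ne_zero h3
      exact_mod_cast this
    have hπ := Real.pi_gt_three
    simp only [Set.mem_Ioo] at h1 h2
    have hk0 : k = 0 := by
      rcases lt_trichotomy k 0 with h | h | h
      · exfalso
        have : (k:ℝ) ≤ -1 := by
          have : k ≤ -1 := by omega
          exact_mod_cast this
        nlinarith
      · exact h
      · exfalso
        have : (1:ℝ) ≤ k := by exact_mod_cast h
        nlinarith
    rw [hk0] at h4
    push_cast at h4
    linarith
  · exact Set.Ioo_infinite (by norm_num)

/-- there is a unimodular w avoiding the spectrum -/
lemma exists_avoid (Q : Matrix (Fin n) (Fin n) ℂ) :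
    ∃ w : ℂ, ‖w‖ = 1 ∧ IsUnit (Q - w • 1) := by
  classical
  set p := Q.charpoly with hp
  have hpne : p ≠ 0 := Q.charpoly_monic.ne_zero
  have hfin : {z : ℂ | p.IsRoot z}.Finite := Polynomial.finite_setOf_isRoot hpne
  obtain ⟨w, hw1, hw2⟩ := (circle_infinite.diff hfin).nonempty
  refine ⟨w, hw1, ?_⟩
  simp only [Set.mem_setOf_eq, Polynomial.IsRoot] at hw2
  have heval : p.eval w = (w • 1 - Q).det := by
    rw [hp, Matrix.charpoly, ← Polynomial.coe_evalRingHom, RingHom.map_det]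
    congr 1
    ext i j
    by_cases h : i = j
    · subst h
      simp [Matrix.charmatrix_apply_eq, Matrix.one_apply, Matrix.sub_apply]
    · simp [Matrix.charmatrix_apply_ne _ _ _ h, Matrix.one_apply_ne h, Matrix.sub_apply]
  rw [Matrix.isUnit_iff_isUnit_det, isUnit_iff_ne_zero]
  intro hdet
  apply hw2
  rw [heval]
  have : Q - w • 1 = -(w • 1 - Q) := by
    simp [neg_sub]
  rw [this, Matrix.det_neg] at hdet
  simpa using hdet


lemma diag_sub_smul_one (v : Fin n → ℂ) (c : ℂ) :
    diagonal v - c • (1 : Matrix (Fin n) (Fin n) ℂ) = diagonal (fun j => v j - c) := by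
  ext j k
  by_cases h : j = k
  · subst h; simp [Matrix.smul_apply]
  · simp [Matrix.diagonal_apply_ne _ h, Matrix.smul_apply, Matrix.one_apply_ne h]

/-- unitary diagonalization via Cayley transform -/
lemma unitary_diag (Q : Matrix (Fin n) (Fin n) ℂ) (hQ : Q * Qᴴ = 1) :
    ∃ (U : Matrix (Fin n) (Fin n) ℂ) (d : Fin n → ℂ),
      U * Uᴴ = 1 ∧ Uᴴ * U = 1 ∧ (∀ j, ‖d j‖ = 1) ∧ Q = U * diagonal d * Uᴴ := by
  classical
  have hQ' : Qᴴ * Q = 1 := mul_eq_one_comm.mp hQ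
  obtain ⟨w, hw, hMunit⟩ := exists_avoid Q
  have hwne : w ≠ 0 := by
    intro h0; rw [h0] at hw; simp at hw
  set M : Matrix (Fin n) (Fin n) ℂ := Q - w • 1 with hM
  set N : Matrix (Fin n) (Fin n) ℂ := Complex.I • (Q + w • 1) with hN
  have hdetM : IsUnit M.det := (Matrix.isUnit_iff_isUnit_det M).1 hMunit
  have hwc : star w * w = 1 := by
    rw [Complex.star_def, mul_comm, Complex.mul_conj, Complex.normSq_eq_norm_sq, hw]
    norm_num
  -- key identity
  have key : Nᴴ * M = Mᴴ * N := by
    have hNH : Nᴴ = (-Complex.I) • (Qᴴ + (star w) • 1) := by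
      rw [hN, Matrix.conjTranspose_smul, Matrix.conjTranspose_add, Matrix.conjTranspose_smul,
        Matrix.conjTranspose_one]
      simp [Complex.star_def, Complex.conj_I]
    have hMH : Mᴴ = Qᴴ - (star w) • 1 := by
      rw [hM, Matrix.conjTranspose_sub, Matrix.conjTranspose_smul, Matrix.conjTranspose_one]
    rw [hNH, hMH, hM, hN]
    rw [Matrix.smul_mul, Matrix.mul_smul]
    simp only [Matrix.add_mul, Matrix.mul_add, Matrix.sub_mul, Matrix.mul_sub,
      Matrix.smul_mul, Matrix.mul_smul, Matrix.mul_one, Matrix.one_mul, hQ',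
      smul_smul]
    match_scalars
    all_goals try ring
    all_goals linear_combination (2*Complex.I) * hwc
  set H : Matrix (Fin n) (Fin n) ℂ := N * M⁻¹ with hH
  have hdetMH : IsUnit Mᴴ.det := by
    rw [Matrix.det_conjTranspose]
    exact hdetM.star
  have hHerm : H.IsHermitian := by
    unfold Matrix.IsHermitian
    rw [hH, Matrix.conjTranspose_mul, Matrix.conjTranspose_nonsing_inv]
    have h1 : Nᴴ = Mᴴ * (N * M⁻¹) := by
      calc Nᴴ = Nᴴ * (M * M⁻¹) := by rw [Matrix.mul_nonsing_inv M hdetM, Matrix.mul_one]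
        _ = (Nᴴ * M) * M⁻¹ := by rw [Matrix.mul_assoc]
        _ = (Mᴴ * N) * M⁻¹ := by rw [key]
        _ = Mᴴ * (N * M⁻¹) := by rw [Matrix.mul_assoc]
    rw [h1, ← Matrix.mul_assoc, Matrix.nonsing_inv_mul Mᴴ hdetMH, Matrix.one_mul]
  set U : Matrix (Fin n) (Fin n) ℂ := (hHerm.eigenvectorUnitary : Matrix (Fin n) (Fin n) ℂ) with hU
  set lam : Fin n → ℝ := hHerm.eigenvalues with hlam
  have hU1 : U * Uᴴ = 1 := by
    rw [← Matrix.star_eq_conjTranspose]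
    exact (Matrix.mem_unitaryGroup_iff).mp hHerm.eigenvectorUnitary.2
  have hU2 : Uᴴ * U = 1 := mul_eq_one_comm.mp hU1
  have hspec : H = U * diagonal (fun j => (lam j : ℂ)) * Uᴴ := by
    rw [← Matrix.star_eq_conjTranspose]
    exact hHerm.spectral_theorem
  have hstep : H - Complex.I • 1 = U * diagonal (fun j => (lam j : ℂ) - Complex.I) * Uᴴ := by
    have hI1 : Complex.I • (1 : Matrix (Fin n) (Fin n) ℂ) = U * (Complex.I • 1) * Uᴴ := by
      rw [Matrix.mul_smul, Matrix.smul_mul, Matrix.mul_one, hU1]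
    rw [hspec]
    conv_lhs => rw [hI1]
    rw [← diag_sub_smul_one, Matrix.mul_sub, Matrix.sub_mul]
  have key2 : (H - Complex.I • 1) * M = (2 * Complex.I * w) • 1 := by
    rw [Matrix.sub_mul, hH, Matrix.mul_assoc, Matrix.nonsing_inv_mul M hdetM, Matrix.mul_one]
    rw [hN, hM]
    rw [Matrix.smul_mul]
    simp only [Matrix.mul_sub, Matrix.smul_mul, Matrix.mul_smul, Matrix.mul_one,
      Matrix.one_mul, smul_add, smul_smul, smul_sub]
    match_scalars
    all_goals ring
  have hne : ∀ j, (lam j : ℂ) - Complex.I ≠ 0 := by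
    intro j h
    have := congrArg Complex.im h
    simp at this
  set d : Fin n → ℂ := fun j => w * ((lam j : ℂ) + Complex.I) / ((lam j : ℂ) - Complex.I)
    with hd
  have hdprop : ∀ j, ((lam j : ℂ) - Complex.I) * (d j - w) = 2 * Complex.I * w := by
    intro j
    rw [hd]
    field_simp [hne j]
    ring
  have key3 : (H - Complex.I • 1) * (U * diagonal d * Uᴴ - w • 1) = (2 * Complex.I * w) • 1 := by
    have hw1 : w • (1 : Matrix (Fin n) (Fin n) ℂ) = U * (w • 1) * Uᴴ := by
      rw [Matrix.mul_smul, Matrix.smul_mul, Matrix.mul_one, hU1]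
    rw [hstep]
    have hY : U * diagonal d * Uᴴ - w • 1
        = U * (diagonal (fun j => d j - w)) * Uᴴ := by
      conv_lhs => rw [hw1]
      rw [← Matrix.sub_mul, ← Matrix.mul_sub, diag_sub_smul_one]
    rw [hY]
    calc (U * diagonal (fun j => (lam j : ℂ) - Complex.I) * Uᴴ) * (U * (diagonal fun j => d j - w) * Uᴴ)
        = U * (diagonal (fun j => (lam j : ℂ) - Complex.I) * (Uᴴ * U) * (diagonal fun j => d j - w)) * Uᴴ := by
          simp only [Matrix.mul_assoc]
      _ = U * (diagonal (fun j => ((lam j : ℂ) - Complex.I) * (d j - w))) * Uᴴ := by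
          rw [hU2, Matrix.mul_one, Matrix.diagonal_mul_diagonal]
      _ = U * ((2 * Complex.I * w) • 1) * Uᴴ := by
          congr 2
          have hconst : (2 * Complex.I * w) • (1 : Matrix (Fin n) (Fin n) ℂ)
              = diagonal (fun _ => 2 * Complex.I * w) := by
            ext a b
            by_cases h : a = b
            · subst h; simp
            · simp [Matrix.one_apply_ne h, Matrix.diagonal_apply_ne _ h]
          rw [hconst]
          exact congrArg diagonal (funext fun j => hdprop j)
      _ = (2 * Complex.I * w) • 1 := by
          rw [Matrix.mul_smul, Matrix.smul_mul, Matrix.mul_one, hU1]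
  have hcne : (2 * Complex.I * w) ≠ 0 := by
    simp [Complex.I_ne_zero, hwne]
  have hHIunit : IsUnit (H - Complex.I • 1).det := by
    have hdd := congrArg Matrix.det key2
    rw [Matrix.det_mul, Matrix.det_smul, Matrix.det_one, mul_one] at hdd
    rw [isUnit_iff_ne_zero]
    intro h
    rw [h, zero_mul] at hdd
    exact (pow_ne_zero _ hcne) hdd.symm
  have hcancel : M = U * diagonal d * Uᴴ - w • 1 := by
    have h1 := key2.trans key3.symm
    calc M = 1 * M := (Matrix.one_mul M).symm
      _ = ((H - Complex.I • 1)⁻¹ * (H - Complex.I • 1)) * M := by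
          rw [Matrix.nonsing_inv_mul _ hHIunit]
      _ = (H - Complex.I • 1)⁻¹ * ((H - Complex.I • 1) * M) := by rw [Matrix.mul_assoc]
      _ = (H - Complex.I • 1)⁻¹ * ((H - Complex.I • 1) * (U * diagonal d * Uᴴ - w • 1)) := by rw [h1]
      _ = ((H - Complex.I • 1)⁻¹ * (H - Complex.I • 1)) * (U * diagonal d * Uᴴ - w • 1) := by
          rw [← Matrix.mul_assoc]
      _ = U * diagonal d * Uᴴ - w • 1 := by rw [Matrix.nonsing_inv_mul _ hHIunit, Matrix.one_mul]
  have hQeq : Q = U * diagonal d * Uᴴ := by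
    have h2 : Q = M + w • 1 := by rw [hM, sub_add_cancel]
    rw [h2, hcancel, sub_add_cancel]
  refine ⟨U, d, hU1, hU2, ?_, hQeq⟩
  intro j
  have h1 : ‖(lam j : ℂ) + Complex.I‖ = ‖(lam j :ℂ) - Complex.I‖ := by
    have heq : (lam j : ℂ) + Complex.I = (starRingEnd ℂ) ((lam j : ℂ) - Complex.I) := by
      rw [map_sub, Complex.conj_I, Complex.conj_ofReal, sub_neg_eq_add]
    rw [heq, Complex.norm_conj]
  rw [hd, norm_div, norm_mul, hw, one_mul, h1]
  exact div_self (norm_ne_zero_iff.2 (hne j))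


lemma trace_unitary_conj (U A : Matrix (Fin n) (Fin n) ℂ) (hU2 : Uᴴ * U = 1) :
    Matrix.trace (U * A * Uᴴ) = Matrix.trace A := by
  rw [Matrix.trace_mul_cycle, hU2, Matrix.one_mul]

lemma frobSq_nonneg (X : Matrix (Fin n) (Fin n) ℂ) : 0 ≤ frobSq X := by
  rw [frobSq, Matrix.trace]
  rw [Complex.re_sum]
  apply Finset.sum_nonneg
  intro i _
  rw [Matrix.diag_apply, Matrix.mul_apply, Complex.re_sum]
  apply Finset.sum_nonneg
  intro j _
  rw [Matrix.conjTranspose_apply, Complex.star_def, Complex.mul_conj]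
  simp [Complex.normSq_nonneg]

/-- build an su log -/
lemma build_log (U : Matrix (Fin n) (Fin n) ℂ) (hU1 : U * Uᴴ = 1) (hU2 : Uᴴ * U = 1)
    (θ : Fin n → ℝ) (hsum : ∑ j, θ j = 0) :
    (U * diagonal (fun j => (θ j : ℂ) * Complex.I) * Uᴴ) ∈ suSet n ∧
    NormedSpace.exp (U * diagonal (fun j => (θ j : ℂ) * Complex.I) * Uᴴ)
      = U * diagonal (fun j => Complex.exp ((θ j : ℂ) * Complex.I)) * Uᴴ ∧
    frobSq (U * diagonal (fun j => (θ j : ℂ) * Complex.I) * Uᴴ) = ∑ j, (θ j) ^ 2 := by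
  set D : Matrix (Fin n) (Fin n) ℂ := diagonal (fun j => (θ j : ℂ) * Complex.I) with hD
  have hDH : Dᴴ = -D := by
    rw [hD, Matrix.diagonal_conjTranspose]
    ext a b
    by_cases h : a = b
    · subst h
      simp [Complex.star_def, Complex.conj_I, Complex.conj_ofReal]
      try ring
    · simp [Matrix.diagonal_apply_ne _ h]
  have hXH : (U * D * Uᴴ)ᴴ = -(U * D * Uᴴ) := by
    rw [Matrix.conjTranspose_mul, Matrix.conjTranspose_mul, Matrix.conjTranspose_conjTranspose,
      hDH]
    simp only [Matrix.neg_mul, Matrix.mul_neg, Matrix.mul_assoc]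
  have hUunit : IsUnit U := by
    rw [Matrix.isUnit_iff_isUnit_det]
    exact IsUnit.of_mul_eq_one _ (by rw [← Matrix.det_mul, hU1, Matrix.det_one])
  have hUinv : U⁻¹ = Uᴴ := Matrix.inv_eq_right_inv hU1
  refine ⟨⟨hXH, ?_⟩, ?_, ?_⟩
  · rw [trace_unitary_conj U D hU2, hD, Matrix.trace_diagonal]
    rw [← Finset.sum_mul]
    norm_cast
    rw [hsum]
    simp
  · rw [← hUinv, Matrix.exp_conj U D hUunit, hUinv, hD, Matrix.exp_diagonal]
    have hfun : (NormedSpace.exp fun j => (θ j : ℂ) * Complex.I)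
        = fun j => Complex.exp ((θ j : ℂ) * Complex.I) :=
      funext fun j => by rw [Pi.coe_exp, ← Complex.exp_eq_exp_ℂ]
    rw [hfun]
  · have hXXH : (U * D * Uᴴ) * (U * D * Uᴴ)ᴴ = U * (D * Dᴴ) * Uᴴ := by
      rw [Matrix.conjTranspose_mul, Matrix.conjTranspose_mul, Matrix.conjTranspose_conjTranspose]
      simp only [Matrix.mul_assoc]
      rw [← Matrix.mul_assoc Uᴴ U (Dᴴ * Uᴴ), hU2, Matrix.one_mul]
    rw [frobSq, hXXH, trace_unitary_conj _ _ hU2, hD, Matrix.diagonal_conjTranspose,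
      Matrix.diagonal_mul_diagonal, Matrix.trace_diagonal]
    rw [Complex.re_sum]
    apply Finset.sum_congr rfl
    intro j _
    simp only [Pi.mul_apply, Pi.star_apply]
    rw [Complex.star_def, Complex.mul_conj]
    simp [Complex.normSq_mul, Complex.normSq_ofReal]
    try ring


def bR (n : ℕ) : ℝ := if Even n then 0 else -π / n

def omegaC (n : ℕ) : ℂ := Complex.exp ((-(π + bR n) : ℝ) * Complex.I)

lemma deltaVal_eq (hn : 1 ≤ n) : deltaVal n = (n : ℝ) * (π ^ 2 - bR n ^ 2) := by
  have hn' : (0:ℝ) < n := by exact_mod_cast hn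
  rw [deltaVal, bR]
  split_ifs with h
  · ring
  · field_simp

lemma pVal_sum {p : ℕ} (hpn : p ≤ n) (a c : ℝ) :
    ∑ j : Fin n, (if (j:ℕ) < p then a else c) = p * a + (n - p : ℕ) * c := by
  rw [Fin.sum_univ_eq_sum_range (fun k => if k < p then a else c) n]
  rw [Finset.range_eq_Ico, ← Finset.sum_Ico_consecutive _ (Nat.zero_le p) hpn]
  have h1 : ∑ k ∈ Finset.Ico 0 p, (if k < p then a else c) = p * a := by
    rw [Finset.sum_congr rfl (fun k hk => if_pos (Finset.mem_Ico.1 hk).2)]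
    simp [mul_comm]
  have h2 : ∑ k ∈ Finset.Ico p n, (if k < p then a else c) = (n - p : ℕ) * c := by
    rw [Finset.sum_congr rfl (fun k hk => if_neg (not_lt.2 (Finset.mem_Ico.1 hk).1))]
    simp [Nat.card_Ico, mul_comm]
  rw [h1, h2]

def thetaStar (n : ℕ) : Fin n → ℝ :=
  fun j => if (j : ℕ) < (n+1)/2 then -(π + bR n) else π - bR n

lemma thetaStar_spec :
    (∑ j, thetaStar n j = 0) ∧ (∑ j, (thetaStar n j)^2 = (n:ℝ) * (π^2 - bR n ^2)) := by
  have hpn : (n+1)/2 ≤ n ∨ n = 0 := by omega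
  rcases Nat.eq_zero_or_pos n with rfl | hn
  · simp
  have hpn' : (n+1)/2 ≤ n := by omega
  constructor
  · rw [show (∑ j, thetaStar n j) = ∑ j : Fin n, (if (j:ℕ) < (n+1)/2 then -(π + bR n) else π - bR n) from rfl,
      pVal_sum hpn']
    rcases Nat.even_or_odd n with ⟨t, ht⟩ | ⟨t, ht⟩
    · have hb : bR n = 0 := by rw [bR, if_pos ⟨t, ht⟩]
      have hp : (n+1)/2 = t := by omega
      have hnp : n - t = t := by omega
      rw [hb, hp, hnp]
      ring
    · have hb : bR n = -π / n := by
        rw [bR, if_neg (by simp [ht, Nat.even_iff, Nat.odd_iff.1 ⟨t, ht⟩])]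
      have hp : (n+1)/2 = t + 1 := by omega
      have hnp : n - (t+1) = t := by omega
      have hn' : (0:ℝ) < n := by exact_mod_cast hn
      have hnt : (n:ℝ) = 2*t + 1 := by rw [ht]; push_cast; ring
      rw [hb, hp, hnp]
      push_cast
      field_simp
      rw [hnt]
      ring
  · rw [show (∑ j, (thetaStar n j)^2)
        = ∑ j : Fin n, (if (j:ℕ) < (n+1)/2 then (-(π + bR n))^2 else (π - bR n)^2) from
        Finset.sum_congr rfl (fun j _ => by rw [thetaStar]; split_ifs <;> rfl),
      pVal_sum hpn']
    rcases Nat.even_or_odd n with ⟨t, ht⟩ | ⟨t, ht⟩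
    · have hb : bR n = 0 := by rw [bR, if_pos ⟨t, ht⟩]
      have hp : (n+1)/2 = t := by omega
      have hnp : n - t = t := by omega
      have hnt : (n:ℝ) = 2*t := by rw [ht]; push_cast; ring
      rw [hb, hp, hnp, hnt]
      ring
    · have hb : bR n = -π / n := by
        rw [bR, if_neg (by simp [ht, Nat.even_iff, Nat.odd_iff.1 ⟨t, ht⟩])]
      have hp : (n+1)/2 = t + 1 := by omega
      have hnp : n - (t+1) = t := by omega
      have hn' : (0:ℝ) < n := by exact_mod_cast hn
      have hnt : (n:ℝ) = 2*t + 1 := by rw [ht]; push_cast; ring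
      rw [hb, hp, hnp]
      push_cast
      field_simp
      rw [hnt]
      ring


lemma omega_unitary : (omegaC n • (1 : Matrix (Fin n) (Fin n) ℂ))
    * (omegaC n • (1 : Matrix (Fin n) (Fin n) ℂ))ᴴ = 1 := by
  rw [Matrix.conjTranspose_smul, Matrix.conjTranspose_one, Matrix.smul_mul, Matrix.mul_smul,
    Matrix.one_mul, smul_smul]
  have habs : ‖omegaC n‖ = 1 := by
    rw [omegaC]
    exact Complex.norm_exp_ofReal_mul_I _
  have : omegaC n * star (omegaC n) = 1 := by
    rw [Complex.star_def, Complex.mul_conj, Complex.normSq_eq_norm_sq, habs]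
    norm_num
  rw [this, one_smul]

lemma omega_det : ((omegaC n) • (1 : Matrix (Fin n) (Fin n) ℂ)).det = 1 := by
  rw [Matrix.det_smul, Matrix.det_one, mul_one, Fintype.card_fin]
  rw [omegaC, ← Complex.exp_nat_mul]
  have harg : (n:ℂ) * (((-(π + bR n)) : ℝ) * Complex.I) = ((2*π*(-(n/2:ℕ) : ℤ) : ℝ)) * Complex.I := by
    have hre : (n:ℝ) * (-(π + bR n)) = 2*π*(-(n/2:ℕ) : ℤ) := by
      rw [bR]
      rcases Nat.even_or_odd n with ⟨t, ht⟩ | ⟨t, ht⟩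
      · rw [if_pos ⟨t, ht⟩]
        have h2 : n/2 = t := by omega
        rw [ht] at h2 ⊢
        rw [h2]
        push_cast
        ring
      · rw [if_neg (by simp [Nat.even_iff, Nat.odd_iff.1 ⟨t, ht⟩])]
        have h2 : n/2 = t := by omega
        have hn0 : (n:ℝ) ≠ 0 := by
          have : 0 < n := by omega
          positivity
        rw [h2]
        have hnt : (n:ℝ) = 2*t+1 := by rw [ht]; push_cast; ring
        field_simp
        rw [hnt]
        push_cast
        ring
    calc (n:ℂ) * (((-(π + bR n)) : ℝ) * Complex.I) = (((n:ℝ) * (-(π + bR n)) : ℝ) : ℂ) * Complex.I := by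
          push_cast; ring
      _ = ((2*π*(-(n/2:ℕ) : ℤ) : ℝ)) * Complex.I := by rw [hre]
  rw [harg]
  have : ((2*π*(-(n/2:ℕ) : ℤ) : ℝ) : ℂ) * Complex.I = ((-(n/2:ℕ) : ℤ) : ℂ) * (2*π*Complex.I) := by
    push_cast; ring
  rw [this, Complex.exp_int_mul_two_pi_mul_I]

lemma lower_bound (X : Matrix (Fin n) (Fin n) ℂ) (hXsu : X ∈ suSet n)
    (hexp : NormedSpace.exp X = (omegaC n) • 1) :
    (n:ℝ) * (π^2 - bR n ^ 2) ≤ frobSq X := by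
  classical
  obtain ⟨hskew, htr0⟩ := hXsu
  have hHerm : (Complex.I • X).IsHermitian := by
    unfold Matrix.IsHermitian
    rw [Matrix.conjTranspose_smul, hskew]
    simp [Complex.star_def, Complex.conj_I]
  set U : Matrix (Fin n) (Fin n) ℂ := (hHerm.eigenvectorUnitary : Matrix (Fin n) (Fin n) ℂ) with hU
  set lam : Fin n → ℝ := hHerm.eigenvalues with hlam
  have hU1 : U * Uᴴ = 1 := by
    rw [← Matrix.star_eq_conjTranspose]
    exact (Matrix.mem_unitaryGroup_iff).mp hHerm.eigenvectorUnitary.2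
  have hU2 : Uᴴ * U = 1 := mul_eq_one_comm.mp hU1
  have hspec : Complex.I • X = U * diagonal (fun j => (lam j : ℂ)) * Uᴴ := by
    rw [← Matrix.star_eq_conjTranspose]
    exact hHerm.spectral_theorem
  set θ : Fin n → ℝ := fun j => -(lam j) with hθ
  have hXdiag : X = U * diagonal (fun j => (θ j : ℂ) * Complex.I) * Uᴴ := by
    have h1 : X = (-Complex.I) • (Complex.I • X) := by
      rw [smul_smul]
      simp
    have h3 : (-Complex.I) • diagonal (fun j => (lam j:ℂ))
        = diagonal (fun j => (θ j:ℂ) * Complex.I) := by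
      ext a b
      by_cases h : a = b
      · subst h
        simp [hθ, Matrix.smul_apply]
        ring
      · simp [Matrix.diagonal_apply_ne _ h, Matrix.smul_apply]
    rw [h1, hspec, ← h3, mul_smul_comm, smul_mul_assoc]
  have htr : Matrix.trace X = ((∑ j, θ j : ℝ) : ℂ) * Complex.I := by
    rw [hXdiag, trace_unitary_conj _ _ hU2, Matrix.trace_diagonal]
    rw [← Finset.sum_mul]
    norm_cast
  have hsum : ∑ j, θ j = 0 := by
    have h0 := htr0
    rw [htr] at h0
    rcases mul_eq_zero.1 h0 with h | h
    · exact_mod_cast h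
    · exact absurd h Complex.I_ne_zero
  obtain ⟨hsu, hexpd, hfrob⟩ := build_log U hU1 hU2 θ hsum
  have hexp2 : U * diagonal (fun j => Complex.exp ((θ j:ℂ)*Complex.I)) * Uᴴ = omegaC n • 1 := by
    rw [← hexpd, ← hXdiag, hexp]
  have hdiageq : diagonal (fun j => Complex.exp ((θ j:ℂ)*Complex.I)) = omegaC n • 1 := by
    have h4 := congrArg (fun M => Uᴴ * M * U) hexp2
    calc diagonal (fun j => Complex.exp ((θ j:ℂ)*Complex.I))
        = (Uᴴ * U) * diagonal (fun j => Complex.exp ((θ j:ℂ)*Complex.I)) * (Uᴴ * U) := by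
          rw [hU2, Matrix.one_mul, Matrix.mul_one]
      _ = Uᴴ * (U * diagonal (fun j => Complex.exp ((θ j:ℂ)*Complex.I)) * Uᴴ) * U := by
          simp only [Matrix.mul_assoc]
      _ = Uᴴ * (omegaC n • 1) * U := by rw [hexp2]
      _ = omegaC n • (Uᴴ * U) := by
          rw [Matrix.mul_smul, Matrix.smul_mul, Matrix.mul_one]
      _ = omegaC n • 1 := by rw [hU2]
  have hjeq : ∀ j, Complex.exp ((θ j :ℂ) * Complex.I) = omegaC n := by
    intro j
    have h5 := congrFun (congrFun hdiageq j) j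
    simpa [Matrix.smul_apply, Matrix.one_apply_eq] using h5
  have hbound : ∀ j, π^2 - bR n^2 - 2*(bR n)*(θ j) ≤ (θ j)^2 := by
    intro j
    have h5 := hjeq j
    rw [omegaC, Complex.exp_eq_exp_iff_exists_int] at h5
    obtain ⟨k, hk⟩ := h5
    have h6 : (θ j : ℝ) = -(π + bR n) + k * (2*π) := by
      have h7 : ((θ j : ℝ) : ℂ) * Complex.I = ((-(π + bR n) + k * (2*π) : ℝ) : ℂ) * Complex.I := by
        rw [hk]; push_cast; ring
      have := mul_right_cancel₀ Complex.I_ne_zero h7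
      exact_mod_cast this
    have h9 : (1:ℝ) ≤ (2*(k:ℝ) - 1)^2 := by
      have h9' : (1:ℤ) ≤ (2*k - 1)^2 := by
        rcases le_or_gt k 0 with h | h
        · nlinarith
        · nlinarith
      exact_mod_cast h9'
    have h8 : (θ j + bR n)^2 = π^2 * (2*(k:ℝ) - 1)^2 := by rw [h6]; ring
    nlinarith [sq_nonneg π, Real.pi_pos]
  have hfinal : (n:ℝ)*(π^2 - bR n^2) ≤ ∑ j, (θ j)^2 := by
    have hle := Finset.sum_le_sum (fun j (_ : j ∈ Finset.univ) => hbound j)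
    have hsplit : ∑ j : Fin n, (π^2 - bR n^2 - 2*(bR n)*(θ j))
        = (n:ℝ)*(π^2 - bR n^2) - 2*(bR n) * ∑ j, θ j := by
      rw [Finset.sum_sub_distrib, Finset.sum_const, Finset.card_univ, Fintype.card_fin,
        ← Finset.mul_sum]
      ring_nf
    rw [hsplit, hsum] at hle
    linarith [hle]
  rw [hXdiag]
  rw [hfrob]
  exact hfinal



lemma mQ_omega (hn1 : 1 ≤ n) : mQ ((omegaC n) • (1 : Matrix (Fin n) (Fin n) ℂ)) = deltaVal n := by
  obtain ⟨hsum, hsq⟩ := thetaStar_spec (n := n)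
  have h1 : (1 : Matrix (Fin n) (Fin n) ℂ) * (1 : Matrix (Fin n) (Fin n) ℂ)ᴴ = 1 := by
    rw [Matrix.conjTranspose_one, Matrix.mul_one]
  have h1' : (1 : Matrix (Fin n) (Fin n) ℂ)ᴴ * (1 : Matrix (Fin n) (Fin n) ℂ) = 1 := by
    rw [Matrix.conjTranspose_one, Matrix.mul_one]
  obtain ⟨hsu, hexpd, hfrob⟩ := build_log 1 h1 h1' (thetaStar n) hsum
  set X₀ : Matrix (Fin n) (Fin n) ℂ
    := 1 * diagonal (fun j => ((thetaStar n j : ℂ)) * Complex.I) * (1:Matrix (Fin n) (Fin n) ℂ)ᴴ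
    with hX₀
  have hexpω : NormedSpace.exp X₀ = omegaC n • 1 := by
    rw [hX₀, hexpd, Matrix.conjTranspose_one, Matrix.one_mul, Matrix.mul_one]
    ext a b
    by_cases h : a = b
    · subst h
      rw [Matrix.diagonal_apply_eq, Matrix.smul_apply, Matrix.one_apply_eq, smul_eq_mul, mul_one]
      show Complex.exp
        ((↑(if (a:ℕ) < (n+1)/2 then -(π + bR n) else π - bR n) : ℂ) * Complex.I) = omegaC n
      split_ifs with hlt
      · rfl
      · have heq : (π - bR n : ℝ) = (-(π + bR n)) + 2*π*((1:ℤ):ℝ) := by push_cast; ring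
        rw [heq, exp_shift]
        rfl
    · rw [Matrix.diagonal_apply_ne _ h, Matrix.smul_apply, Matrix.one_apply_ne h, smul_eq_mul,
        mul_zero]
  have hval : frobSq X₀ = deltaVal n := by
    rw [hX₀, hfrob, hsq, deltaVal_eq hn1]
  have hbdd : BddBelow {r : ℝ | ∃ X ∈ suSet n,
      NormedSpace.exp X = (omegaC n) • (1 : Matrix (Fin n) (Fin n) ℂ) ∧ frobSq X = r} := by
    refine ⟨0, ?_⟩
    rintro r ⟨X, _, _, rfl⟩
    exact frobSq_nonneg X
  apply le_antisymm
  · exact csInf_le hbdd ⟨X₀, hsu, hexpω, hval⟩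
  · refine le_csInf ⟨deltaVal n, X₀, hsu, hexpω, hval⟩ ?_
    rintro r ⟨X, hXsu, hXexp, rfl⟩
    rw [deltaVal_eq hn1]
    exact lower_bound X hXsu hXexp

end Stmt18Aux

/-- `δ_n := max { m(Q) : Q ∈ SU_n }` equals `n·π²` for `n` even and
`(n − 1/n)·π²` for `n` odd; i.e. this value is an upper bound of `m` on `SU_n`
and is attained. -/
theorem stmt_18 (n : ℕ) (hn : 2 ≤ n) :
    IsGreatest {r : ℝ | ∃ Q ∈ SpecialUnitary n, mQ Q = r}
      (if Even n then (n : ℝ) * π ^ 2 else ((n : ℝ) - 1 / (n : ℝ)) * π ^ 2) := by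
  have hn1 : 1 ≤ n := by omega
  have hδ : (if Even n then (n : ℝ) * π ^ 2 else ((n : ℝ) - 1 / (n : ℝ)) * π ^ 2)
      = Stmt18Aux.deltaVal n := rfl
  rw [hδ]
  constructor
  · exact ⟨Stmt18Aux.omegaC n • 1, ⟨Stmt18Aux.omega_unitary, Stmt18Aux.omega_det⟩,
      Stmt18Aux.mQ_omega hn1⟩
  · rintro r ⟨Q, ⟨hQu, hQdet⟩, rfl⟩
    obtain ⟨U, d, hU1, hU2, habs, hQeq⟩ := Stmt18Aux.unitary_diag Q hQu
    have hdetU : U.det * Uᴴ.det = 1 := by rw [← Matrix.det_mul, hU1, Matrix.det_one]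
    have hprod : ∏ j, d j = 1 := by
      have h2 : Q.det = ∏ j, d j := by
        rw [hQeq, Matrix.det_mul, Matrix.det_mul, Matrix.det_diagonal]
        calc U.det * (∏ j, d j) * Uᴴ.det = (U.det * Uᴴ.det) * ∏ j, d j := by ring
          _ = ∏ j, d j := by rw [hdetU, one_mul]
      rw [← h2, hQdet]
    obtain ⟨θ, hθexp, hθsum, hθsq⟩ := Stmt18Aux.exists_angles hn1 d habs hprod
    obtain ⟨hsu, hexpd, hfrob⟩ := Stmt18Aux.build_log U hU1 hU2 θ hθsum
    have hexpQ : NormedSpace.exp (U * diagonal (fun j => (θ j:ℂ) * Complex.I) * Uᴴ) = Q := by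
      rw [hexpd, hQeq]
      congr 2
      exact congrArg diagonal (funext fun j => hθexp j)
    have hbdd : BddBelow {r : ℝ | ∃ X ∈ suSet n,
        NormedSpace.exp X = Q ∧ frobSq X = r} := by
      refine ⟨0, ?_⟩
      rintro r ⟨X, _, _, rfl⟩
      exact Stmt18Aux.frobSq_nonneg X
    calc mQ Q ≤ frobSq (U * diagonal (fun j => (θ j:ℂ) * Complex.I) * Uᴴ) :=
          csInf_le hbdd ⟨_, hsu, hexpQ, rfl⟩
      _ = ∑ j, θ j ^ 2 := hfrob
      _ ≤ Stmt18Aux.deltaVal n := hθsq
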